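/- Fix α ∈ (1/2, 1) and C ∈ ℝ, and for n ≥ 2 set R_n = 2 ln n + C. Then for every constant c > 0 there exist a constant c₂ > 0 and N such that for all n ≥ N and all r with 0 ≤ r ≤ R_n/2 − c₂, n · I(r, R_n) ≥ c · √n. (In the hyperbolic random graph model, the expected degree of a vertex with radial coordinate r ≤ R_n/2 − c₂ is at least c √n.) -/

import Mathlib

open Real MeasureTheory

/-- `hrgI α r R` is the probability measure `μ(B_r(R) ∩ B_0(R))` in the hyperbolic
random graph model: the probability that a vertex sampled in the disk of radius `R`
(with radial density `α sinh(α s)/(cosh(α R) - 1)` and uniform angle) lies within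
hyperbolic distance `R` of the point with polar coordinates `(r, 0)`. -/
noncomputable def hrgI (α r R : ℝ) : ℝ :=
  (1 / (2 * Real.pi)) * ∫ φ in (0 : ℝ)..(2 * Real.pi), ∫ s in (0 : ℝ)..R,
    if Real.cosh r * Real.cosh s - Real.sinh r * Real.sinh s * Real.cos φ ≤ Real.cosh R
    then α * Real.sinh (α * s) / (Real.cosh (α * R) - 1) else 0


/-- The antiderivative of the radial density. -/
lemma hrg_density_integral (α R a : ℝ) :
    ∫ s in (0:ℝ)..a, α * Real.sinh (α * s) / (Real.cosh (α * R) - 1)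
      = (Real.cosh (α * a) - 1) / (Real.cosh (α * R) - 1) := by
  have h : ∀ x ∈ Set.uIcc (0:ℝ) a,
      HasDerivAt (fun s => Real.cosh (α * s) / (Real.cosh (α * R) - 1))
        (α * Real.sinh (α * x) / (Real.cosh (α * R) - 1)) x := by
    intro x _
    have h1 : HasDerivAt (fun s : ℝ => α * s) α x := by
      simpa using (hasDerivAt_id x).const_mul α
    have h2 := (Real.hasDerivAt_cosh (α * x)).comp x h1
    have h3 := h2.div_const (Real.cosh (α * R) - 1)
    exact h3.congr_deriv (by ring)
  have hi : IntervalIntegrable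
      (fun s => α * Real.sinh (α * s) / (Real.cosh (α * R) - 1)) volume 0 a := by
    apply Continuous.intervalIntegrable
    fun_prop
  rw [intervalIntegral.integral_eq_sub_of_hasDerivAt h hi]
  rw [mul_zero, Real.cosh_zero, div_sub_div_same]

/-- Key geometric estimate: for `s ≤ R - 2` and small angle, the point is within distance `R`. -/
lemma hrg_geom (R r s φ : ℝ) (hR : 8 ≤ R) (hr0 : 0 ≤ r) (hr : r ≤ R - 2)
    (hs0 : 0 ≤ s) (hs : s ≤ R - 2) (hφ0 : 0 ≤ φ) (hφ : φ ≤ Real.exp (-r / 2)) :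
    Real.cosh r * Real.cosh s - Real.sinh r * Real.sinh s * Real.cos φ ≤ Real.cosh R := by
  have key : Real.cosh r * Real.cosh s - Real.sinh r * Real.sinh s * Real.cos φ
      = Real.cosh (r - s) + Real.sinh r * Real.sinh s * (1 - Real.cos φ) := by
    rw [Real.cosh_sub]; ring
  have h1 : Real.cosh (r - s) ≤ Real.cosh (R - 2) := by
    rw [Real.cosh_le_cosh]
    rw [abs_of_nonneg (by linarith : (0:ℝ) ≤ R - 2), abs_le]
    constructor <;> linarith
  have hsr : Real.sinh r ≤ Real.exp r / 2 := by
    rw [Real.sinh_eq]; have := Real.exp_pos (-r); linarith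
  have hss : Real.sinh s ≤ Real.exp s / 2 := by
    rw [Real.sinh_eq]; have := Real.exp_pos (-s); linarith
  have hsr0 : 0 ≤ Real.sinh r := Real.sinh_nonneg_iff.2 hr0
  have hss0 : 0 ≤ Real.sinh s := Real.sinh_nonneg_iff.2 hs0
  have hc1 : 0 ≤ 1 - Real.cos φ := by have := Real.cos_le_one φ; linarith
  have hc2 : 1 - Real.cos φ ≤ φ ^ 2 / 2 := by
    have := Real.one_sub_sq_div_two_le_cos (x := φ); linarith
  have hφ2 : φ ^ 2 ≤ Real.exp (-r) := by
    have h' : φ ^ 2 ≤ Real.exp (-r / 2) ^ 2 := by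
      have := Real.exp_pos (-r / 2); nlinarith
    calc φ ^ 2 ≤ Real.exp (-r / 2) ^ 2 := h'
      _ = Real.exp (-r) := by rw [sq, ← Real.exp_add]; ring_nf
  -- bound the perturbation term
  have herr : Real.sinh r * Real.sinh s * (1 - Real.cos φ) ≤ Real.exp s / 8 := by
    have e1 : Real.exp r * Real.exp (-r) = 1 := by rw [← Real.exp_add]; simp
    have e2 : 0 < Real.exp r := Real.exp_pos r
    have e3 : 0 < Real.exp s := Real.exp_pos s
    have step1 : Real.sinh r * Real.sinh s * (1 - Real.cos φ)
        ≤ (Real.exp r / 2) * (Real.exp s / 2) * (Real.exp (-r) / 2) := by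
      have h2 : 1 - Real.cos φ ≤ Real.exp (-r) / 2 := by linarith
      have hA : Real.sinh r * Real.sinh s ≤ (Real.exp r / 2) * (Real.exp s / 2) :=
        mul_le_mul hsr hss hss0 (by positivity)
      exact mul_le_mul hA h2 hc1 (by positivity)
    calc Real.sinh r * Real.sinh s * (1 - Real.cos φ)
        ≤ (Real.exp r / 2) * (Real.exp s / 2) * (Real.exp (-r) / 2) := step1
      _ = Real.exp s / 8 := by
          field_simp
          nlinarith [e1]
  have hes : Real.exp s ≤ Real.exp (R - 2) := Real.exp_le_exp.2 (by linarith)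
  have hcRm2 : Real.cosh (R - 2) ≤ Real.exp (R - 2) := by
    rw [Real.cosh_eq]
    have h4 : Real.exp (-(R - 2)) ≤ Real.exp (R - 2) := Real.exp_le_exp.2 (by linarith)
    linarith
  have hcR : Real.exp R / 2 ≤ Real.cosh R := by
    rw [Real.cosh_eq]; have := Real.exp_pos (-R); linarith
  have hfin : Real.exp (R - 2) + Real.exp (R - 2) / 8 ≤ Real.exp R / 2 := by
    have e1 : Real.exp (R - 2) * Real.exp 2 = Real.exp R := by
      rw [← Real.exp_add]; ring_nf
    have e2 : (3:ℝ) ≤ Real.exp 2 := by nlinarith [Real.add_one_le_exp (2:ℝ)]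
    have e3 : 0 < Real.exp (R - 2) := Real.exp_pos _
    nlinarith
  linarith [key ▸ (by linarith [herr, h1, hes] :
    Real.cosh (r - s) + Real.sinh r * Real.sinh s * (1 - Real.cos φ)
      ≤ Real.exp (R - 2) + Real.exp (R - 2) / 8)]


noncomputable def hrgF (α r R φ s : ℝ) : ℝ :=
  if Real.cosh r * Real.cosh s - Real.sinh r * Real.sinh s * Real.cos φ ≤ Real.cosh R
  then α * Real.sinh (α * s) / (Real.cosh (α * R) - 1) else 0

lemma hrgF_intervalIntegrable (α r R φ a b : ℝ) :
    IntervalIntegrable (hrgF α r R φ) volume a b := by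
  have hg : Continuous fun s : ℝ => α * Real.sinh (α * s) / (Real.cosh (α * R) - 1) := by
    fun_prop
  have hS : MeasurableSet {s : ℝ |
      Real.cosh r * Real.cosh s - Real.sinh r * Real.sinh s * Real.cos φ ≤ Real.cosh R} :=
    measurableSet_le (by fun_prop) measurable_const
  have heq : hrgF α r R φ = Set.indicator {s : ℝ |
      Real.cosh r * Real.cosh s - Real.sinh r * Real.sinh s * Real.cos φ ≤ Real.cosh R}
      (fun s => α * Real.sinh (α * s) / (Real.cosh (α * R) - 1)) := by
    funext s
    simp [hrgF, Set.indicator_apply, Set.mem_setOf_eq]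
  rw [heq, intervalIntegrable_iff]
  exact (intervalIntegrable_iff.1 (hg.intervalIntegrable a b)).indicator hS

lemma hrgF_measurable (α r R : ℝ) :
    Measurable fun p : ℝ × ℝ => hrgF α r R p.1 p.2 := by
  unfold hrgF
  exact Measurable.ite
    (measurableSet_le (by fun_prop) measurable_const) (by fun_prop) measurable_const

lemma hrgA_stronglyMeasurable (α r R : ℝ) (hR : 0 ≤ R) :
    StronglyMeasurable fun φ => ∫ s in (0:ℝ)..R, hrgF α r R φ s := by
  have h := (hrgF_measurable α r R).stronglyMeasurable
  have h1 : StronglyMeasurable fun φ =>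
      ∫ s, hrgF α r R φ s ∂(volume.restrict (Set.Ioc (0:ℝ) R)) :=
    h.integral_prod_right'
  have : (fun φ => ∫ s in (0:ℝ)..R, hrgF α r R φ s)
      = fun φ => ∫ s in Set.Ioc (0:ℝ) R, hrgF α r R φ s := by
    funext φ; exact intervalIntegral.integral_of_le hR
  rw [this]; exact h1

lemma hrg_key (α r R : ℝ) (hα : 1 / 2 < α) (hα1 : α < 1) (hR : 8 ≤ R)
    (hr0 : 0 ≤ r) (hr : r ≤ R / 2) :
    Real.exp (-r / 2) / (4 * Real.exp 2)
      ≤ ∫ φ in (0:ℝ)..(2 * π), ∫ s in (0:ℝ)..R, hrgF α r R φ s := by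
  have hR0 : (0:ℝ) ≤ R := by linarith
  have hαpos : 0 < α := by linarith
  have hK : 0 < Real.cosh (α * R) - 1 := by
    have h1 : Real.cosh 0 < Real.cosh (α * R) := by
      rw [Real.cosh_lt_cosh]
      rw [abs_zero, abs_of_pos (by positivity)]
      positivity
    rw [Real.cosh_zero] at h1; linarith
  have hg_nonneg : ∀ s : ℝ, 0 ≤ s →
      0 ≤ α * Real.sinh (α * s) / (Real.cosh (α * R) - 1) := by
    intro s hs
    have : 0 ≤ Real.sinh (α * s) := Real.sinh_nonneg_iff.2 (by positivity)
    positivity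
  have hf_nonneg : ∀ φ s : ℝ, 0 ≤ s → 0 ≤ hrgF α r R φ s := by
    intro φ s hs
    unfold hrgF
    split
    · exact hg_nonneg s hs
    · exact le_refl 0
  set A : ℝ → ℝ := fun φ => ∫ s in (0:ℝ)..R, hrgF α r R φ s with hA
  have hAnonneg : ∀ φ, 0 ≤ A φ := fun φ =>
    intervalIntegral.integral_nonneg hR0 (fun s hs => hf_nonneg φ s hs.1)
  have hAle1 : ∀ φ, A φ ≤ 1 := by
    intro φ
    have h1 : A φ ≤ ∫ s in (0:ℝ)..R, α * Real.sinh (α * s) / (Real.cosh (α * R) - 1) := by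
      apply intervalIntegral.integral_mono_on hR0 (hrgF_intervalIntegrable α r R φ 0 R)
        (by apply Continuous.intervalIntegrable; fun_prop)
      intro s hs
      unfold hrgF
      split
      · exact le_refl _
      · exact hg_nonneg s hs.1
    rw [hrg_density_integral α R R, div_self (ne_of_gt hK)] at h1
    exact h1
  have hAint : ∀ a b : ℝ, IntervalIntegrable A volume a b := by
    intro a b
    rw [intervalIntegrable_iff]
    have hone : IntegrableOn (fun _ : ℝ => (1:ℝ)) (Set.uIoc a b) volume := by
      rw [← intervalIntegrable_iff]; exact intervalIntegrable_const
    refine hone.mono' ((hrgA_stronglyMeasurable α r R hR0).aestronglyMeasurable.restrict) ?_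
    filter_upwards with φ
    rw [Real.norm_eq_abs, abs_of_nonneg (hAnonneg φ)]
    exact hAle1 φ
  set φ₀ : ℝ := Real.exp (-r / 2) with hφ₀def
  have hφ₀pos : 0 < φ₀ := Real.exp_pos _
  have hφ₀le1 : φ₀ ≤ 1 := Real.exp_le_one_iff.2 (by linarith)
  have hπ3 : (3:ℝ) < π := Real.pi_gt_three
  have hφ₀le : φ₀ ≤ 2 * π := by linarith
  set D : ℝ := (Real.cosh (α * (R - 2)) - 1) / (Real.cosh (α * R) - 1) with hDdef
  have hAD : ∀ φ ∈ Set.Icc (0:ℝ) φ₀, D ≤ A φ := by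
    intro φ hφ
    have h1 := intervalIntegral.integral_add_adjacent_intervals
      (hrgF_intervalIntegrable α r R φ 0 (R - 2)) (hrgF_intervalIntegrable α r R φ (R - 2) R)
    have h2 : 0 ≤ ∫ s in (R - 2)..R, hrgF α r R φ s :=
      intervalIntegral.integral_nonneg (by linarith) (fun s hs => hf_nonneg φ s (by
        have := hs.1; linarith))
    have h3 : (∫ s in (0:ℝ)..(R - 2), hrgF α r R φ s)
        = ∫ s in (0:ℝ)..(R - 2), α * Real.sinh (α * s) / (Real.cosh (α * R) - 1) := by
      apply intervalIntegral.integral_congr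
      intro s hs
      rw [Set.uIcc_of_le (by linarith : (0:ℝ) ≤ R - 2)] at hs
      unfold hrgF
      rw [if_pos]
      exact hrg_geom R r s φ hR hr0 (by linarith) hs.1 hs.2 hφ.1 hφ.2
    show D ≤ ∫ s in (0:ℝ)..R, hrgF α r R φ s
    rw [← h1, h3, hrg_density_integral α R (R - 2)]
    linarith
  -- D is bounded below by 1/(4 e²)
  have hD : 1 / (4 * Real.exp 2) ≤ D := by
    have e2pos : (0:ℝ) < Real.exp 2 := Real.exp_pos 2
    have he1 : (2:ℝ) ≤ Real.exp 1 := by nlinarith [Real.add_one_le_exp (1:ℝ)]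
    have he2 : (4:ℝ) ≤ Real.exp 2 := by
      have : Real.exp 1 * Real.exp 1 = Real.exp 2 := by rw [← Real.exp_add]; norm_num
      nlinarith
    have hαR4 : (4:ℝ) ≤ α * R := by nlinarith
    have c1 : 4 * Real.exp 2 ≤ Real.exp (α * R) := by
      have h4 : Real.exp 4 ≤ Real.exp (α * R) := Real.exp_le_exp.2 hαR4
      have : Real.exp 2 * Real.exp 2 = Real.exp 4 := by rw [← Real.exp_add]; norm_num
      nlinarith
    have c2 : Real.exp (α * R) * Real.exp (-2) / 2 ≤ Real.cosh (α * (R - 2)) := by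
      have m1 : Real.exp (α * R) * Real.exp (-(2 * α)) = Real.exp (α * (R - 2)) := by
        rw [← Real.exp_add]; ring_nf
      have m2 : Real.exp (-2) ≤ Real.exp (-(2 * α)) := Real.exp_le_exp.2 (by linarith)
      have m3 : Real.exp (α * (R - 2)) / 2 ≤ Real.cosh (α * (R - 2)) := by
        rw [Real.cosh_eq]
        have := Real.exp_pos (-(α * (R - 2)))
        linarith
      have epos := Real.exp_pos (α * R)
      nlinarith
    have c3 : Real.cosh (α * R) - 1 ≤ Real.exp (α * R) := by
      rw [Real.cosh_eq]
      have h5 : Real.exp (-(α * R)) ≤ Real.exp (α * R) := Real.exp_le_exp.2 (by nlinarith)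
      linarith
    rw [hDdef, div_le_div_iff₀ (by positivity) hK]
    have e2e : Real.exp (-2) * Real.exp 2 = 1 := by rw [← Real.exp_add]; norm_num
    have epos := Real.exp_pos (α * R)
    nlinarith [mul_le_mul_of_nonneg_right c2 (by positivity : (0:ℝ) ≤ 4 * Real.exp 2)]
  -- assemble
  have hsplit := intervalIntegral.integral_add_adjacent_intervals
    (hAint 0 φ₀) (hAint φ₀ (2 * π))
  have h2 : 0 ≤ ∫ φ in φ₀..(2 * π), A φ :=
    intervalIntegral.integral_nonneg hφ₀le (fun φ _ => hAnonneg φ)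
  have h1 : φ₀ * D ≤ ∫ φ in (0:ℝ)..φ₀, A φ := by
    have := intervalIntegral.integral_mono_on hφ₀pos.le
      (intervalIntegrable_const (c := D)) (hAint 0 φ₀) hAD
    rw [intervalIntegral.integral_const, smul_eq_mul, sub_zero] at this
    exact this
  have hfin : Real.exp (-r / 2) / (4 * Real.exp 2) ≤ φ₀ * D := by
    have := mul_le_mul_of_nonneg_left hD hφ₀pos.le
    calc Real.exp (-r / 2) / (4 * Real.exp 2) = φ₀ * (1 / (4 * Real.exp 2)) := by
          rw [hφ₀def]; ring
      _ ≤ φ₀ * D := this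
  calc Real.exp (-r / 2) / (4 * Real.exp 2) ≤ φ₀ * D := hfin
    _ ≤ ∫ φ in (0:ℝ)..φ₀, A φ := h1
    _ ≤ (∫ φ in (0:ℝ)..φ₀, A φ) + ∫ φ in φ₀..(2 * π), A φ := by linarith
    _ = ∫ φ in (0:ℝ)..(2 * π), A φ := hsplit


lemma hrgI_eq (α r R : ℝ) : hrgI α r R
    = (1 / (2 * π)) * ∫ φ in (0:ℝ)..(2 * π), ∫ s in (0:ℝ)..R, hrgF α r R φ s := rfl

theorem expected_degree_inner_lower_bound (α C : ℝ)
    (hα : 1 / 2 < α) (hα1 : α < 1) :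
    ∀ c > 0, ∃ c₂ > 0, ∃ N : ℕ, ∀ n : ℕ, N ≤ n → ∀ r : ℝ,
      0 ≤ r → r ≤ (2 * Real.log n + C) / 2 - c₂ →
      c * Real.sqrt n ≤ (n : ℝ) * hrgI α r (2 * Real.log n + C) := by
  intro c hc
  set T : ℝ := 8 * π * Real.exp 2 * (c * Real.exp (C / 4)) with hTdef
  have hπ : (0:ℝ) < π := Real.pi_pos
  have hT : 0 < T := by positivity
  refine ⟨max 1 (2 * Real.log T), lt_of_lt_of_le one_pos (le_max_left _ _),
    ⌈Real.exp ((8 - C) / 2)⌉₊ + 1, ?_⟩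
  intro n hn r hr0 hr
  set c₂ : ℝ := max 1 (2 * Real.log T) with hc₂def
  have hc₂pos : (0:ℝ) < c₂ := lt_of_lt_of_le one_pos (le_max_left _ _)
  set R : ℝ := 2 * Real.log n + C with hRdef
  have hn1 : 1 ≤ n := le_trans (Nat.le_add_left 1 _) hn
  have hnpos : (0:ℝ) < n := by exact_mod_cast hn1
  have hnR : Real.exp ((8 - C) / 2) ≤ (n:ℝ) := by
    calc Real.exp ((8 - C) / 2) ≤ (⌈Real.exp ((8 - C) / 2)⌉₊ : ℝ) := Nat.le_ceil _
      _ ≤ (n:ℝ) := by exact_mod_cast le_trans (Nat.le_add_right _ 1) hn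
  have hlog : (8 - C) / 2 ≤ Real.log n := (Real.le_log_iff_exp_le hnpos).2 hnR
  have hR8 : 8 ≤ R := by rw [hRdef]; linarith
  have hrhalf : r ≤ R / 2 := by linarith
  have hkey := hrg_key α r R hα hα1 hR8 hr0 hrhalf
  have hIlb : Real.exp (-r / 2) / (8 * π * Real.exp 2) ≤ hrgI α r R := by
    rw [hrgI_eq]
    have h1 : (1 / (2 * π)) * (Real.exp (-r / 2) / (4 * Real.exp 2))
        ≤ (1 / (2 * π)) * ∫ φ in (0:ℝ)..(2 * π), ∫ s in (0:ℝ)..R, hrgF α r R φ s :=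
      mul_le_mul_of_nonneg_left hkey (by positivity)
    have h2 : (1 / (2 * π)) * (Real.exp (-r / 2) / (4 * Real.exp 2))
        = Real.exp (-r / 2) / (8 * π * Real.exp 2) := by
      field_simp; ring
    linarith
  -- arithmetic with exponentials
  have hsqrt : Real.exp (Real.log n / 2) = Real.sqrt n := by
    have h2 : Real.exp (Real.log n / 2) ^ 2 = (n:ℝ) := by
      rw [sq, ← Real.exp_add,
        show Real.log n / 2 + Real.log n / 2 = Real.log n by ring, Real.exp_log hnpos]
    conv_rhs => rw [← h2]
    rw [Real.sqrt_sq (Real.exp_pos _).le]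
  have hsqrtpos : 0 < Real.sqrt n := Real.sqrt_pos.2 hnpos
  have hnefour : (n:ℝ) * Real.exp (-(R / 4)) = Real.sqrt n * Real.exp (-(C / 4)) := by
    have e1 : Real.exp (-(R / 4)) = Real.exp (-(Real.log n / 2)) * Real.exp (-(C / 4)) := by
      rw [← Real.exp_add, hRdef]; ring_nf
    have e2 : Real.exp (-(Real.log n / 2)) = (Real.sqrt n)⁻¹ := by
      rw [Real.exp_neg, hsqrt]
    have e3 : Real.sqrt n * Real.sqrt n = (n:ℝ) := Real.mul_self_sqrt hnpos.le
    have e4 : (Real.sqrt n)⁻¹ * (n:ℝ) = Real.sqrt n := by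
      rw [inv_mul_eq_div, div_eq_iff (ne_of_gt hsqrtpos)]
      exact e3.symm
    rw [e1, e2]
    calc (n:ℝ) * ((Real.sqrt n)⁻¹ * Real.exp (-(C / 4)))
        = ((Real.sqrt n)⁻¹ * (n:ℝ)) * Real.exp (-(C / 4)) := by ring
      _ = Real.sqrt n * Real.exp (-(C / 4)) := by rw [e4]
  have hTexp : T ≤ Real.exp (c₂ / 2) := by
    calc T = Real.exp (Real.log T) := (Real.exp_log hT).symm
      _ ≤ Real.exp (c₂ / 2) := Real.exp_le_exp.2 (by
          have := le_max_right 1 (2 * Real.log T); rw [hc₂def]; linarith)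
  have hrle : Real.exp (c₂ / 2) * Real.exp (-(R / 4)) ≤ Real.exp (-r / 2) := by
    rw [← Real.exp_add]
    exact Real.exp_le_exp.2 (by linarith)
  have h6 : T * (Real.sqrt n * Real.exp (-(C / 4))) ≤ (n:ℝ) * Real.exp (-r / 2) := by
    calc T * (Real.sqrt n * Real.exp (-(C / 4)))
        ≤ Real.exp (c₂ / 2) * (Real.sqrt n * Real.exp (-(C / 4))) :=
          mul_le_mul_of_nonneg_right hTexp (by positivity)
      _ = Real.exp (c₂ / 2) * ((n:ℝ) * Real.exp (-(R / 4))) := by rw [hnefour]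
      _ = (n:ℝ) * (Real.exp (c₂ / 2) * Real.exp (-(R / 4))) := by ring
      _ ≤ (n:ℝ) * Real.exp (-r / 2) := mul_le_mul_of_nonneg_left hrle hnpos.le
  have e7 : T * (Real.sqrt n * Real.exp (-(C / 4)))
      = c * Real.sqrt n * (8 * π * Real.exp 2) := by
    have ecc : Real.exp (C / 4) * Real.exp (-(C / 4)) = 1 := by
      rw [← Real.exp_add]; norm_num
    rw [hTdef]
    linear_combination (8 * π * Real.exp 2 * c * Real.sqrt n) * ecc
  have hfinal : c * Real.sqrt n ≤ (n:ℝ) * Real.exp (-r / 2) / (8 * π * Real.exp 2) := by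
    rw [le_div_iff₀ (by positivity)]
    rw [← e7]
    exact h6
  calc c * Real.sqrt n ≤ (n:ℝ) * Real.exp (-r / 2) / (8 * π * Real.exp 2) := hfinal
    _ = (n:ℝ) * (Real.exp (-r / 2) / (8 * π * Real.exp 2)) := by ring
    _ ≤ (n:ℝ) * hrgI α r R := mul_le_mul_of_nonneg_left hIlb hnpos.le
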